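/- Let D be a strongly connected simple directed graph with vertex set {v_1,…,v_n}, n ≥ 4, such that v_1, v_2, …, v_n is a shortest directed path from v_1 to v_n, v_2 ∈ V_max, and v_n ∈ V_min. If γ(D) > (2/3)(n−1)!, then N⁺(v_2)={v_1,v_3}, N⁺(v_3)={v_1,v_2,v_4}, and d⁺(v_i) ≥ ⌊2i/3⌋ for all 4 ≤ i ≤ n−1. -/

import Mathlib

namespace PR

/-- Out-degree of `u` in the digraph on vertex set `{1,…,n} ⊆ ℕ` with adjacency `E`. -/
def outDeg (n : ℕ) (E : ℕ → ℕ → Bool) (u : ℕ) : ℕ :=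
  ((Finset.Icc 1 n).filter (fun v => E u v)).card

/-- In-degree of `u`. -/
def inDeg (n : ℕ) (E : ℕ → ℕ → Bool) (u : ℕ) : ℕ :=
  ((Finset.Icc 1 n).filter (fun v => E v u)).card

/-- `E` is a simple digraph on the vertex set `{1,…,n}`: all edges join distinct
vertices of `{1,…,n}` (no loops; the `Bool`-valued adjacency precludes multi-edges). -/
def IsDigraph (n : ℕ) (E : ℕ → ℕ → Bool) : Prop :=
  ∀ u v, E u v = true → u ∈ Finset.Icc 1 n ∧ v ∈ Finset.Icc 1 n ∧ u ≠ v

/-- `WalkLen E k u v` : there is a directed walk of length `k` from `u` to `v`. -/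
def WalkLen (E : ℕ → ℕ → Bool) : ℕ → ℕ → ℕ → Prop
  | 0, u, v => u = v
  | (k+1), u, v => ∃ w, E u w = true ∧ WalkLen E k w v

/-- Every vertex reaches every other vertex by a directed walk. -/
def StronglyConnected (n : ℕ) (E : ℕ → ℕ → Bool) : Prop :=
  ∀ u ∈ Finset.Icc 1 n, ∀ v ∈ Finset.Icc 1 n, ∃ k, WalkLen E k u v

/-- Directed distance: number of edges in a shortest directed path from `u` to `v`. -/
noncomputable def dist (E : ℕ → ℕ → Bool) (u v : ℕ) : ℕ :=
  sInf {k | WalkLen E k u v}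

/-- Distance between two sets of vertices. -/
noncomputable def setDist (E : ℕ → ℕ → Bool) (A B : Set ℕ) : ℕ :=
  sInf {k | ∃ a ∈ A, ∃ b ∈ B, dist E a b = k}

/-- `φ` is the Perron vector of the simple random walk on the digraph: a positive
probability distribution on `{1,…,n}` which is stationary, i.e. `φ P = φ` where
`P(u,v) = 1/d⁺(u)` for edges `(u,v)` and `0` otherwise. -/
def IsPerron (n : ℕ) (E : ℕ → ℕ → Bool) (φ : ℕ → ℝ) : Prop :=
  (∀ v ∈ Finset.Icc 1 n, 0 < φ v) ∧
  (∑ v ∈ Finset.Icc 1 n, φ v = 1) ∧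
  (∀ v ∈ Finset.Icc 1 n, φ v =
    ∑ u ∈ Finset.Icc 1 n, if E u v then φ u / (outDeg n E u : ℝ) else 0)

/-- The principal ratio `γ = (max_u φ(u)) / (min_u φ(u))` of a vector `φ` on `{1,…,n}`. -/
noncomputable def pratio (n : ℕ) (φ : ℕ → ℝ) : ℝ :=
  if h : (Finset.Icc 1 n).Nonempty then
    ((Finset.Icc 1 n).sup' h φ) / ((Finset.Icc 1 n).inf' h φ)
  else 0

/-- Vertices attaining the maximum of `φ`. -/
def Vmax (n : ℕ) (φ : ℕ → ℝ) : Set ℕ :=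
  {v | v ∈ Finset.Icc 1 n ∧ ∀ u ∈ Finset.Icc 1 n, φ u ≤ φ v}

/-- Vertices attaining the minimum of `φ`. -/
def Vmin (n : ℕ) (φ : ℕ → ℝ) : Set ℕ :=
  {v | v ∈ Finset.Icc 1 n ∧ ∀ u ∈ Finset.Icc 1 n, φ v ≤ φ u}

lemma walk_trans {E : ℕ → ℕ → Bool} :
    ∀ {k l u v w}, WalkLen E k u v → WalkLen E l v w → WalkLen E (k + l) u w := by
  intro k
  induction k with
  | zero => intro l u v w h1 h2; cases h1; simpa using h2
  | succ k ih =>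
    intro l u v w h1 h2
    obtain ⟨x, hx, hw⟩ := h1
    have hE : k + 1 + l = (k + l) + 1 := by omega
    rw [hE]
    exact ⟨x, hx, ih hw h2⟩

lemma path_walk {n : ℕ} {E : ℕ → ℕ → Bool}
    (hpath : ∀ i, 1 ≤ i → i < n → E i (i+1) = true) :
    ∀ m i, 1 ≤ i → i + m ≤ n → WalkLen E m i (i + m) := by
  intro m
  induction m with
  | zero => intro i _ _; rfl
  | succ m ih =>
    intro i hi h
    refine ⟨i+1, hpath i hi (by omega), ?_⟩
    have h2 : i + (m+1) = (i+1) + m := by omega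
    rw [h2]
    exact ih (i+1) (by omega) (by omega)

lemma dist_le {E : ℕ → ℕ → Bool} {u v k : ℕ} (h : WalkLen E k u v) : dist E u v ≤ k :=
  Nat.sInf_le h

lemma walk_dist {E : ℕ → ℕ → Bool} {u v : ℕ} (h : ∃ k, WalkLen E k u v) :
    WalkLen E (dist E u v) u v :=
  Nat.sInf_mem h

lemma prod_Icc_two : ∀ m : ℕ, ∏ i ∈ Finset.Icc 2 m, i = Nat.factorial m := by
  intro m
  induction m with
  | zero => simp [Nat.factorial]
  | succ m ih =>
    rcases Nat.eq_zero_or_pos m with h | h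
    · subst h; simp [Nat.factorial]
    · rw [Finset.prod_Icc_succ_top (by omega : 2 ≤ m + 1), ih, Nat.factorial_succ]
      ring

theorem stmt4 (n : ℕ) (hn : 4 ≤ n) (E : ℕ → ℕ → Bool) (φ : ℕ → ℝ)
    (hD : IsDigraph n E) (hSC : StronglyConnected n E) (hφ : IsPerron n E φ)
    (hpath : ∀ i, 1 ≤ i → i < n → E i (i+1) = true)
    (hshort : dist E 1 n = n - 1)
    (hmax : (2:ℕ) ∈ Vmax n φ) (hmin : n ∈ Vmin n φ)
    (hγ : (2/3 : ℝ) * (Nat.factorial (n - 1) : ℝ) < pratio n φ) :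
    (∀ v, E 2 v = true ↔ (v = 1 ∨ v = 3)) ∧
    (∀ v, E 3 v = true ↔ (v = 1 ∨ v = 2 ∨ v = 4)) ∧
    (∀ i, 4 ≤ i → i ≤ n - 1 → 2 * i / 3 ≤ outDeg n E i) := by
  -- distance from 1 to any vertex i is i - 1
  have hdist : ∀ i, 1 ≤ i → i ≤ n → dist E 1 i = i - 1 := by
    intro i h1 h2
    have hup : dist E 1 i ≤ i - 1 := by
      have := path_walk hpath (i-1) 1 le_rfl (by omega)
      rw [show 1 + (i-1) = i by omega] at this
      exact dist_le this
    have hw1 : WalkLen E (dist E 1 i) 1 i := by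
      refine walk_dist ⟨i-1, ?_⟩
      have := path_walk hpath (i-1) 1 le_rfl (by omega)
      rwa [show 1 + (i-1) = i by omega] at this
    have hw2 : WalkLen E (n - i) i n := by
      have := path_walk hpath (n-i) i h1 (by omega)
      rwa [show i + (n-i) = n by omega] at this
    have := dist_le (walk_trans hw1 hw2)
    rw [hshort] at this
    omega
  -- edges from i go to vertices ≤ i+1
  have hedge : ∀ i j, 1 ≤ i → i ≤ n → E i j = true → j ≤ i + 1 ∧ 1 ≤ j ∧ j ≤ n ∧ j ≠ i := by
    intro i j h1 h2 hE
    obtain ⟨_, hj, hne⟩ := hD i j hE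
    simp only [Finset.mem_Icc] at hj
    have hw1 : WalkLen E (i-1) 1 i := by
      have := path_walk hpath (i-1) 1 le_rfl (by omega)
      rwa [show 1 + (i-1) = i by omega] at this
    have hw2 : WalkLen E 1 i j := ⟨j, hE, rfl⟩
    have hle : dist E 1 j ≤ i := by
      have := dist_le (walk_trans hw1 hw2)
      rwa [show i - 1 + 1 = i by omega] at this
    rw [hdist j hj.1 hj.2] at hle
    exact ⟨by omega, hj.1, hj.2, fun h => hne h.symm⟩
  -- outdegree bounds
  have hdle : ∀ i, 1 ≤ i → i ≤ n → outDeg n E i ≤ i := by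
    intro i h1 h2
    have hsub : (Finset.Icc 1 n).filter (fun v => E i v) ⊆ (Finset.Icc 1 (i+1)).erase i := by
      intro v hv
      simp only [Finset.mem_filter] at hv
      obtain ⟨hle, h1v, _, hne⟩ := hedge i v h1 h2 hv.2
      simp only [Finset.mem_erase, Finset.mem_Icc]
      exact ⟨hne, h1v, hle⟩
    calc outDeg n E i ≤ ((Finset.Icc 1 (i+1)).erase i).card := Finset.card_le_card hsub
      _ = i := by
          rw [Finset.card_erase_of_mem (by simp [Finset.mem_Icc]; omega)]
          simp [Nat.card_Icc]
  have hdpos : ∀ i, 1 ≤ i → i < n → 1 ≤ outDeg n E i := by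
    intro i h1 h2
    have : i + 1 ∈ (Finset.Icc 1 n).filter (fun v => E i v) := by
      simp only [Finset.mem_filter, Finset.mem_Icc]
      exact ⟨⟨by omega, by omega⟩, hpath i h1 h2⟩
    exact Finset.card_pos.mpr ⟨_, this⟩
  -- step inequality
  have hstep : ∀ k, 1 ≤ k → k < n → φ k ≤ φ (k+1) * (outDeg n E k : ℝ) := by
    intro k h1 h2
    have hk1 : (k+1) ∈ Finset.Icc 1 n := by simp [Finset.mem_Icc]; omega
    have hst := hφ.2.2 (k+1) hk1
    have hterm : φ k / (outDeg n E k : ℝ) ≤ φ (k+1) := by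
      rw [hst]
      have hkmem : k ∈ Finset.Icc 1 n := by simp [Finset.mem_Icc]; omega
      have := Finset.single_le_sum (f := fun u => if E u (k+1) then φ u / (outDeg n E u : ℝ) else 0)
        (fun u hu => by
          split
          · exact div_nonneg (le_of_lt (hφ.1 u hu)) (Nat.cast_nonneg _)
          · exact le_rfl) hkmem
      simpa [hpath k h1 h2] using this
    have hdk : (0:ℝ) < (outDeg n E k : ℝ) := by
      exact_mod_cast hdpos k h1 h2
    calc φ k = φ k / (outDeg n E k : ℝ) * (outDeg n E k : ℝ) := by field_simp
      _ ≤ φ (k+1) * (outDeg n E k : ℝ) :=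
          mul_le_mul_of_nonneg_right hterm (le_of_lt hdk)
  -- chain
  have chain : ∀ k, 2 ≤ k → k ≤ n →
      φ 2 ≤ φ k * ∏ i ∈ Finset.Icc 2 (k-1), (outDeg n E i : ℝ) := by
    intro k hk
    induction k, hk using Nat.le_induction with
    | base => intro _; simp
    | succ k hk ih =>
      intro hkn
      have ihk := ih (by omega)
      have hstepk := hstep k (by omega) (by omega)
      have hprodnn : (0:ℝ) ≤ ∏ i ∈ Finset.Icc 2 (k-1), (outDeg n E i : ℝ) :=
        Finset.prod_nonneg fun i _ => Nat.cast_nonneg _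
      have h2 : φ 2 ≤ (φ (k+1) * (outDeg n E k : ℝ)) * ∏ i ∈ Finset.Icc 2 (k-1), (outDeg n E i : ℝ) :=
        le_trans ihk (mul_le_mul_of_nonneg_right hstepk hprodnn)
      have hsplit : ∏ i ∈ Finset.Icc 2 (k+1-1), (outDeg n E i : ℝ) =
          (∏ i ∈ Finset.Icc 2 (k-1), (outDeg n E i : ℝ)) * (outDeg n E k : ℝ) := by
        rw [show k + 1 - 1 = (k-1) + 1 by omega,
          Finset.prod_Icc_succ_top (by omega : 2 ≤ (k-1)+1),
          show k - 1 + 1 = k by omega]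
      rw [hsplit]
      calc φ 2 ≤ (φ (k+1) * (outDeg n E k : ℝ)) * ∏ i ∈ Finset.Icc 2 (k-1), (outDeg n E i : ℝ) := h2
        _ = φ (k+1) * ((∏ i ∈ Finset.Icc 2 (k-1), (outDeg n E i : ℝ)) * (outDeg n E k : ℝ)) := by ring
  -- principal ratio equals φ2/φn
  have h1n : (Finset.Icc 1 n).Nonempty := ⟨1, by simp [Finset.mem_Icc]; omega⟩
  have hsup : (Finset.Icc 1 n).sup' h1n φ = φ 2 :=
    le_antisymm (Finset.sup'_le h1n φ hmax.2) (Finset.le_sup' φ hmax.1)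
  have hinf : (Finset.Icc 1 n).inf' h1n φ = φ n :=
    le_antisymm (Finset.inf'_le φ hmin.1) (Finset.le_inf' h1n φ hmin.2)
  have hφn : 0 < φ n := hφ.1 n hmin.1
  have hpr : pratio n φ = φ 2 / φ n := by
    rw [pratio, dif_pos h1n, hsup, hinf]
  set P : ℕ := ∏ i ∈ Finset.Icc 2 (n-1), outDeg n E i with hP
  have hchain := chain n (by omega) le_rfl
  have hPcast : ((P : ℝ)) = ∏ i ∈ Finset.Icc 2 (n-1), (outDeg n E i : ℝ) := by
    rw [hP]; push_cast; ring
  have hratP : pratio n φ ≤ (P : ℝ) := by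
    rw [hpr, div_le_iff₀ hφn, hPcast, mul_comm]
    exact hchain
  -- factorial product
  have hfact : ∏ i ∈ Finset.Icc 2 (n-1), i = Nat.factorial (n-1) := prod_Icc_two (n-1)
  -- key numeric inequality in ℕ
  have hkey : 2 * Nat.factorial (n-1) < 3 * P := by
    have h1 : (2/3 : ℝ) * (Nat.factorial (n-1) : ℝ) < (P : ℝ) := lt_of_lt_of_le hγ hratP
    have h2 : (2 : ℝ) * (Nat.factorial (n-1) : ℝ) < 3 * (P : ℝ) := by linarith
    exact_mod_cast h2
  have hkey2 : ∀ j ∈ Finset.Icc 2 (n-1), 2 * j < 3 * outDeg n E j := by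
    intro j hj
    simp only [Finset.mem_Icc] at hj
    have hjmem : j ∈ Finset.Icc 2 (n-1) := by simp [Finset.mem_Icc]; omega
    have hPsplit : outDeg n E j * ∏ i ∈ (Finset.Icc 2 (n-1)).erase j, outDeg n E i = P :=
      Finset.mul_prod_erase _ _ hjmem
    have hmono : ∏ i ∈ (Finset.Icc 2 (n-1)).erase j, outDeg n E i ≤
        ∏ i ∈ (Finset.Icc 2 (n-1)).erase j, i := by
      apply Finset.prod_le_prod'
      intro i hi
      have hi' := Finset.mem_of_mem_erase hi
      simp only [Finset.mem_Icc] at hi'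
      exact hdle i (by omega) (by omega)
    have hidsplit : j * ∏ i ∈ (Finset.Icc 2 (n-1)).erase j, i = Nat.factorial (n-1) := by
      have := Finset.mul_prod_erase (Finset.Icc 2 (n-1)) id hjmem
      simp only [id] at this
      rw [this, hfact]
    have h1 : j * P ≤ outDeg n E j * Nat.factorial (n-1) := by
      calc j * P = outDeg n E j * (j * ∏ i ∈ (Finset.Icc 2 (n-1)).erase j, outDeg n E i) := by
            rw [← hPsplit]; ring
        _ ≤ outDeg n E j * (j * ∏ i ∈ (Finset.Icc 2 (n-1)).erase j, i) :=
            Nat.mul_le_mul_left _ (Nat.mul_le_mul_left _ hmono)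
        _ = outDeg n E j * Nat.factorial (n-1) := by rw [hidsplit]
    have hfacpos : 0 < Nat.factorial (n-1) := Nat.factorial_pos _
    have hmain : (2 * j) * Nat.factorial (n-1) < (3 * outDeg n E j) * Nat.factorial (n-1) := by
      calc (2 * j) * Nat.factorial (n-1) = j * (2 * Nat.factorial (n-1)) := by ring
        _ < j * (3 * P) := by
            have hj0 : 0 < j := by omega
            exact (Nat.mul_lt_mul_left hj0).mpr hkey
        _ = 3 * (j * P) := by ring
        _ ≤ 3 * (outDeg n E j * Nat.factorial (n-1)) := Nat.mul_le_mul_left _ h1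
        _ = (3 * outDeg n E j) * Nat.factorial (n-1) := by ring
    exact Nat.lt_of_mul_lt_mul_right hmain
  -- conclusion 1
  refine ⟨?_, ?_, ?_⟩
  · have hd2 : 2 ≤ outDeg n E 2 := by
      have := hkey2 2 (by simp [Finset.mem_Icc]; omega)
      omega
    have hsub : (Finset.Icc 1 n).filter (fun v => E 2 v) ⊆ ({1, 3} : Finset ℕ) := by
      intro v hv
      simp only [Finset.mem_filter] at hv
      obtain ⟨hle, h1v, _, hne⟩ := hedge 2 v (by omega) (by omega) hv.2
      simp only [Finset.mem_insert, Finset.mem_singleton]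
      omega
    have heq : (Finset.Icc 1 n).filter (fun v => E 2 v) = ({1, 3} : Finset ℕ) := by
      apply Finset.eq_of_subset_of_card_le hsub
      have : ({1, 3} : Finset ℕ).card = 2 := by decide
      rw [this]
      exact hd2
    intro v
    constructor
    · intro hE
      have hvmem : v ∈ (Finset.Icc 1 n).filter (fun v => E 2 v) := by
        simp only [Finset.mem_filter]
        exact ⟨(hD 2 v hE).2.1, hE⟩
      rw [heq] at hvmem
      simpa using hvmem
    · intro hv
      have hvmem : v ∈ (Finset.Icc 1 n).filter (fun v => E 2 v) := by
        rw [heq]; simp; omega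
      exact (Finset.mem_filter.mp hvmem).2
  · have hd3 : 3 ≤ outDeg n E 3 := by
      have := hkey2 3 (by simp [Finset.mem_Icc]; omega)
      omega
    have hsub : (Finset.Icc 1 n).filter (fun v => E 3 v) ⊆ ({1, 2, 4} : Finset ℕ) := by
      intro v hv
      simp only [Finset.mem_filter] at hv
      obtain ⟨hle, h1v, _, hne⟩ := hedge 3 v (by omega) (by omega) hv.2
      simp only [Finset.mem_insert, Finset.mem_singleton]
      omega
    have heq : (Finset.Icc 1 n).filter (fun v => E 3 v) = ({1, 2, 4} : Finset ℕ) := by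
      apply Finset.eq_of_subset_of_card_le hsub
      have : ({1, 2, 4} : Finset ℕ).card = 3 := by decide
      rw [this]
      exact hd3
    intro v
    constructor
    · intro hE
      have hvmem : v ∈ (Finset.Icc 1 n).filter (fun v => E 3 v) := by
        simp only [Finset.mem_filter]
        exact ⟨(hD 3 v hE).2.1, hE⟩
      rw [heq] at hvmem
      simpa using hvmem
    · intro hv
      have hvmem : v ∈ (Finset.Icc 1 n).filter (fun v => E 3 v) := by
        rw [heq]; simp; omega
      exact (Finset.mem_filter.mp hvmem).2
  · intro i h4 hin
    have := hkey2 i (by simp [Finset.mem_Icc]; omega)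
    omega

end PR
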